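/- Let $(S_1,\dots,S_{n-1},P)$ be a commuting tuple of bounded operators on $\mathcal{H}$ with $A_1,\dots,A_{n-1}$ on $\mathcal{D}_P$ satisfying $D_P S_i = A_i D_P + A_{n-i}^* D_P P$ for each $i$. Let $W_1 : \mathcal{H} \to \ell^2(\mathbb{N},\mathcal{D}_P)$ be defined by $W_1 h = (D_P P^k h)_{k\ge 0}$. Then for each $i$, $(I\otimes A_i + M_z^*\otimes A_{n-i}^*) W_1 = W_1 S_i$, where $(I\otimes A_i + M_z^*\otimes A_{n-i}^*)$ sends $(a_0,a_1,\dots)$ to $(A_i a_0 + A_{n-i}^* a_1,\ A_i a_1 + A_{n-i}^* a_2,\ \dots)$. -/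
import Mathlib


open ContinuousLinearMap

/-- Let `(S₁,…,S_{n-1},P)` be a commuting tuple on a Hilbert space `H` with
`P` a contraction, and let `A₁,…,A_{n-1}` (operators on `𝒟_P`) satisfy the fundamental
equations `D_P Sᵢ = Aᵢ D_P + A_{n-i}* D_P P`.  Let `W₁ : H → ℓ²(ℕ, 𝒟_P) ≅ H²(𝔻)⊗𝒟_P` be
`W₁ h = (D_P Pᵏ h)ₖ`.  Then `(I⊗Aᵢ + M_z*⊗A_{n-i}*) W₁ = W₁ Sᵢ`, i.e. coordinatewise
`Aᵢ((W₁h)ₖ) + A_{n-i}*((W₁h)ₖ₊₁) = (W₁(Sᵢh))ₖ`. -/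
theorem stmt15 {H : Type*} [NormedAddCommGroup H] [InnerProductSpace ℂ H] [CompleteSpace H]
    (n : ℕ) (hn : 2 ≤ n)
    (S : ℕ → (H →L[ℂ] H)) (P : H →L[ℂ] H) (hP : ‖P‖ ≤ 1)
    (hcomm : ∀ i j, 1 ≤ i → i ≤ n - 1 → 1 ≤ j → j ≤ n - 1 → S i * S j = S j * S i)
    (hcommP : ∀ i, 1 ≤ i → i ≤ n - 1 → S i * P = P * S i)
    (DP : H →L[ℂ] H) (hDPpos : DP.IsPositive) (hDPsq : DP * DP = 1 - adjoint P * P)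
    (A : ℕ → (H →L[ℂ] H))
    (hA : ∀ i, 1 ≤ i → i ≤ n - 1 →
      DP * S i = A i * DP + adjoint (A (n - i)) * DP * P)
    (W₁ : H →L[ℂ] lp (fun _ : ℕ => H) 2)
    (hW₁ : ∀ (h : H) (k : ℕ), (W₁ h) k = DP ((P ^ k) h)) :
    ∀ i, 1 ≤ i → i ≤ n - 1 → ∀ (h : H) (k : ℕ),
      A i ((W₁ h) k) + adjoint (A (n - i)) ((W₁ h) (k + 1)) = (W₁ (S i h)) k := by
  intro i hi1 hi2 h k
  have hPk : ∀ k : ℕ, S i * P ^ k = P ^ k * S i := by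
    intro k
    induction k with
    | zero => simp
    | succ m ih =>
      rw [pow_succ, ← mul_assoc, ih, mul_assoc, hcommP i hi1 hi2, ← mul_assoc]
  have key := hA i hi1 hi2
  have e2 : (P ^ k) (S i h) = S i ((P ^ k) h) := by
    have := congrFun (congrArg DFunLike.coe (hPk k)) h
    simpa [mul_apply] using this.symm
  have h1 : DP ((P ^ k) (S i h)) = A i (DP ((P ^ k) h))
      + (adjoint (A (n - i))) (DP (P ((P ^ k) h))) := by
    rw [e2]
    have := congrFun (congrArg DFunLike.coe key) ((P ^ k) h)
    simpa [mul_apply] using this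
  have hP1 : P ((P ^ k) h) = (P ^ (k + 1)) h := by
    rw [pow_succ']; rfl
  rw [hW₁, hW₁, hW₁, h1, hP1]
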